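/- Let f : ℝⁿ → ℝ be differentiable, bounded below by f_low, and let ε_g > 0, ε_H > 0, and c > 0. Define K̄₂ = ⌈(3(f(x_0) − f_low)/c)·max{ε_g⁻³ε_H³, ε_H⁻³}⌉ + 2. Then there is no sequence x_0, x_1, …, x_{K̄₂} in ℝⁿ satisfying all of the following for every l ∈ {0, …, K̄₂ − 1}: (i) f(x_{l+1}) ≤ f(x_l); (ii) if ‖∇f(x_l)‖ ≤ ε_g then f(x_l) − f(x_{l+1}) ≥ c·ε_H³; (iii) if ‖∇f(x_l)‖ > ε_g and ‖∇f(x_{l+1})‖ > ε_g then f(x_l) − f(x_{l+1}) ≥ c·min{ε_g³ε_H⁻³, ε_H³}. -/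

import Mathlib

open RealInnerProductSpace

/-- Theorem 4 (second-order iteration complexity, abstracted): no sequence of
iterates can satisfy the per-iteration decrease guarantees of the damped
Newton-CG algorithm for `K̄₂` consecutive iterations. -/
theorem stmt18
    {n : ℕ} (f : EuclideanSpace ℝ (Fin n) → ℝ) (f_low : ℝ)
    (hdiff : Differentiable ℝ f)
    (hbound : ∀ z, f_low ≤ f z)
    (ε_g ε_H c : ℝ) (hεg : 0 < ε_g) (hεH : 0 < ε_H) (hc : 0 < c) :
    ∀ x : ℕ → EuclideanSpace ℝ (Fin n),
      ¬ (∀ l < ⌈3 * (f (x 0) - f_low) / c *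
            max ((ε_g^3)⁻¹ * ε_H^3) ((ε_H^3)⁻¹)⌉₊ + 2,
          f (x (l+1)) ≤ f (x l) ∧
          (‖gradient f (x l)‖ ≤ ε_g →
            f (x l) - f (x (l+1)) ≥ c * ε_H^3) ∧
          (ε_g < ‖gradient f (x l)‖ → ε_g < ‖gradient f (x (l+1))‖ →
            f (x l) - f (x (l+1)) ≥
              c * min (ε_g^3 * (ε_H^3)⁻¹) (ε_H^3))) := by
  intro x h
  set f0 := f (x 0) with hf0
  set M := max ((ε_g^3)⁻¹ * ε_H^3) ((ε_H^3)⁻¹) with hM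
  set δ := min (ε_g^3 * (ε_H^3)⁻¹) (ε_H^3) with hδ
  set K := ⌈3 * (f0 - f_low) / c * M⌉₊ + 2 with hK
  have hεg3 : (0:ℝ) < ε_g^3 := by positivity
  have hεH3 : (0:ℝ) < ε_H^3 := by positivity
  have hδpos : 0 < δ := lt_min (by positivity) hεH3
  have hMpos : 0 < M := lt_max_of_lt_right (by positivity)
  have hδM : δ * M = 1 := by
    rcases le_total (ε_g^3 * (ε_H^3)⁻¹) (ε_H^3) with hle | hle
    · have h1 : (ε_H^3)⁻¹ ≤ (ε_g^3)⁻¹ * ε_H^3 := by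
        have h2 := mul_le_mul_of_nonneg_left hle (inv_pos.2 hεg3).le
        rwa [← mul_assoc, inv_mul_cancel₀ hεg3.ne', one_mul] at h2
      rw [hδ, hM, min_eq_left hle, max_eq_left h1]
      field_simp
    · have h1 : (ε_g^3)⁻¹ * ε_H^3 ≤ (ε_H^3)⁻¹ := by
        nlinarith [mul_pos hεg3 hεH3, inv_pos.2 hεH3, inv_pos.2 hεg3,
          mul_inv_cancel₀ hεH3.ne', mul_inv_cancel₀ hεg3.ne']
      rw [hδ, hM, min_eq_right hle, max_eq_right h1]
      field_simp
  -- each pair of consecutive iterations decreases f by at least c*δ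
  have pair : ∀ l, l + 1 < K → c * δ ≤ f (x l) - f (x (l+2)) := by
    intro l hl
    obtain ⟨hm1, hs1, hb1⟩ := h l (by omega)
    obtain ⟨hm2, hs2, hb2⟩ := h (l+1) hl
    have hδε : c * δ ≤ c * ε_H^3 :=
      mul_le_mul_of_nonneg_left (min_le_right _ _) hc.le
    by_cases h1 : ‖gradient f (x l)‖ ≤ ε_g
    · have := hs1 h1
      linarith
    · push_neg at h1
      by_cases h2 : ‖gradient f (x (l+1))‖ ≤ ε_g
      · have := hs2 h2
        linarith
      · push_neg at h2
        have := hb1 h1 h2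
        linarith
  have main : ∀ l, 2 * l ≤ K → (l:ℝ) * (c * δ) ≤ f0 - f (x (2*l)) := by
    intro l
    induction l with
    | zero => intro _; simp [hf0]
    | succ k ih =>
      intro hk
      have h1 := ih (by omega)
      have h2 := pair (2*k) (by omega)
      have he : 2 * (k+1) = 2*k + 2 := by ring
      rw [he]
      push_cast
      linarith
  set m := K / 2 with hm
  have h2m : 2 * m ≤ K := by omega
  have hge : ⌈3 * (f0 - f_low) / c * M⌉₊ + 1 ≤ 2 * m := by omega
  have hmain := main m h2m
  have hlow := hbound (x (2*m))
  have hA : 3 * (f0 - f_low) / c * M ≤ (⌈3 * (f0 - f_low) / c * M⌉₊ : ℝ) :=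
    Nat.le_ceil _
  have hfl : 0 ≤ f0 - f_low := sub_nonneg.2 (hbound (x 0))
  have hB : (f0 - f_low) / c * M * (c * δ) = f0 - f_low := by
    field_simp
    linear_combination (f0 - f_low) * hδM
  have h2mR : (3 * (f0 - f_low) / c * M) + 1 ≤ ((2 * m : ℕ) : ℝ) := by
    calc 3 * (f0 - f_low) / c * M + 1
        ≤ (⌈3 * (f0 - f_low) / c * M⌉₊ : ℝ) + 1 := by linarith
      _ ≤ ((2 * m : ℕ) : ℝ) := by exact_mod_cast hge
  have hmgt : (f0 - f_low) / c * M < (m : ℝ) := by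
    have : (((2:ℕ) * m : ℕ) : ℝ) = 2 * (m:ℝ) := by push_cast; ring
    rw [this] at h2mR
    have h3 : 3 * (f0 - f_low) / c * M = 3 * ((f0 - f_low) / c * M) := by ring
    rw [h3] at h2mR
    have hBnn : 0 ≤ (f0 - f_low) / c * M := by positivity
    linarith
  have hcδ : 0 < c * δ := mul_pos hc hδpos
  have : f0 - f_low < (m:ℝ) * (c * δ) := by
    calc f0 - f_low = (f0 - f_low) / c * M * (c * δ) := hB.symm
      _ < (m:ℝ) * (c * δ) := by exact mul_lt_mul_of_pos_right hmgt hcδ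
  linarith
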